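/- Let n, p ≥ 1, W ∈ ℝ^{n×p} with rows w_i, y ∈ ℝ^n, λ ≥ 0, δ ≥ 0. If β̂ is a local minimizer of the matrix uncertainty lasso objective β ↦ (1/(2n))∑_{i=1}^n (y_i − w_iᵀβ)² + λ‖β‖₁ + (δ/2)‖β‖₁², then for every j = 1,…,p: (1/n)|∑_{i=1}^n w_{ij}(y_i − w_iᵀβ̂)| ≤ λ + δ‖β̂‖₁, i.e. β̂ lies in the feasible set of the matrix uncertainty selector. -/
import Mathlib

open Filter Topology

/-- KKT-based claim that solutions of the matrix uncertainty lasso are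
contained in the feasible set of the matrix uncertainty selector: if `β̂` is a
local minimizer of `(1/(2n))∑ᵢ(yᵢ − wᵢᵀβ)² + λ‖β‖₁ + (δ/2)‖β‖₁²`, then
`(1/n)|∑ᵢ wᵢⱼ(yᵢ − wᵢᵀβ̂)| ≤ λ + δ‖β̂‖₁` for every `j`. -/
theorem stmt_9 (n p : ℕ) (hn : 1 ≤ n) (hp : 1 ≤ p)
    (W : Fin n → Fin p → ℝ) (y : Fin n → ℝ)
    (lam δ : ℝ) (hlam : 0 ≤ lam) (hδ : 0 ≤ δ)
    (βhat : Fin p → ℝ)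
    (hmin : IsLocalMin
      (fun β : Fin p → ℝ =>
        (1 / (2 * (n : ℝ))) * ∑ i, (y i - ∑ j, W i j * β j) ^ 2 +
          lam * ∑ j, |β j| + (δ / 2) * (∑ j, |β j|) ^ 2)
      βhat) :
    ∀ j, (1 / (n : ℝ)) * |∑ i, W i j * (y i - ∑ j', W i j' * βhat j')| ≤
      lam + δ * ∑ j', |βhat j'| := by
  intro j
  have hn' : (0 : ℝ) < n := by
    have : (1 : ℝ) ≤ (n : ℝ) := by exact_mod_cast hn
    linarith
  set f : (Fin p → ℝ) → ℝ := fun β =>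
      (1 / (2 * (n : ℝ))) * ∑ i, (y i - ∑ j, W i j * β j) ^ 2 +
        lam * ∑ j, |β j| + (δ / 2) * (∑ j, |β j|) ^ 2 with hf
  set N : ℝ := ∑ j', |βhat j'| with hN
  set S : ℝ := ∑ i, W i j * (y i - ∑ j', W i j' * βhat j') with hS
  set A : ℝ := ∑ i, (W i j) ^ 2 with hA
  have hN0 : 0 ≤ N := by
    rw [hN]; exact Finset.sum_nonneg fun k _ => abs_nonneg _
  have hA0 : 0 ≤ A := by
    rw [hA]; exact Finset.sum_nonneg fun i _ => sq_nonneg _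
  set σ : ℝ := if 0 ≤ S then 1 else -1 with hσdef
  have hσS : σ * S = |S| := by
    rcases le_or_gt 0 S with h | h
    · rw [hσdef, if_pos h, one_mul, abs_of_nonneg h]
    · rw [hσdef, if_neg (not_le.mpr h), abs_of_neg h]; ring
  have hσsq : σ ^ 2 = 1 := by
    rcases le_or_gt 0 S with h | h
    · rw [hσdef, if_pos h]; norm_num
    · rw [hσdef, if_neg (not_le.mpr h)]; norm_num
  have hσabs : |σ| = 1 := by
    rcases le_or_gt 0 S with h | h
    · rw [hσdef, if_pos h]; norm_num
    · rw [hσdef, if_neg (not_le.mpr h)]; norm_num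
  set c : ℝ → (Fin p → ℝ) := fun t k => βhat k + σ * t * (if k = j then 1 else 0)
    with hc
  have hc0 : c 0 = βhat := by funext k; simp [hc]
  have hct : Continuous c := by
    apply continuous_pi
    intro k
    exact continuous_const.add ((continuous_const.mul continuous_id).mul continuous_const)
  have htend : Filter.Tendsto c (𝓝 0) (𝓝 βhat) := hc0 ▸ hct.tendsto 0
  have hmin' : ∀ᶠ x in 𝓝 βhat, f βhat ≤ f x := hmin
  have hev : ∀ᶠ t in 𝓝 (0 : ℝ), f βhat ≤ f (c t) := htend.eventually hmin'
  set d : ℝ := 1 / (2 * (n : ℝ)) with hd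
  have hd0 : 0 < d := by rw [hd]; positivity
  set C : ℝ := A * d + δ / 2 with hC
  have hC0 : 0 ≤ C := by
    have : 0 ≤ A * d := mul_nonneg hA0 hd0.le
    rw [hC]; linarith
  -- the key computation
  have key : ∀ t : ℝ, 0 ≤ t →
      f (c t) ≤ f βhat - 2 * t * |S| * d + t * (lam + δ * N) + t ^ 2 * C := by
    intro t ht
    have hinner : ∀ i, (y i - ∑ k, W i k * c t k)
        = (y i - ∑ k, W i k * βhat k) - σ * t * W i j := by
      intro i
      have h0 : ∑ k, W i k * c t k
          = (∑ k, W i k * βhat k) + W i j * (σ * t) := by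
        simp only [hc, mul_add, Finset.sum_add_distrib, mul_ite, mul_one, mul_zero,
          Finset.sum_ite_eq', Finset.mem_univ, if_true, ← mul_assoc]
      rw [h0]; ring
    have hquad : ∑ i, (y i - ∑ k, W i k * c t k) ^ 2
        = (∑ i, (y i - ∑ k, W i k * βhat k) ^ 2) - 2 * t * |S| + t ^ 2 * A := by
      have e1 : ∀ i, (y i - ∑ k, W i k * c t k) ^ 2
          = (y i - ∑ k, W i k * βhat k) ^ 2
            - (2 * (σ * t)) * (W i j * (y i - ∑ k, W i k * βhat k))
            + (σ ^ 2 * t ^ 2) * (W i j) ^ 2 := by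
        intro i; rw [hinner i]; ring
      have e2 : ∑ i, (y i - ∑ k, W i k * c t k) ^ 2
          = ∑ i, ((y i - ∑ k, W i k * βhat k) ^ 2
            - (2 * (σ * t)) * (W i j * (y i - ∑ k, W i k * βhat k))
            + (σ ^ 2 * t ^ 2) * (W i j) ^ 2) :=
        Finset.sum_congr rfl fun i _ => e1 i
      rw [e2, Finset.sum_add_distrib, Finset.sum_sub_distrib, ← Finset.mul_sum,
        ← Finset.mul_sum, ← hS, ← hA, hσsq]
      have e3 : 2 * (σ * t) * S = 2 * t * |S| := by rw [← hσS]; ring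
      rw [e3]; ring
    have hLle : ∑ k, |c t k| ≤ N + t := by
      have h1 : ∀ k, |c t k| ≤ |βhat k| + t * (if k = j then 1 else 0) := by
        intro k
        rcases eq_or_ne k j with h | h
        · subst h
          simp only [hc, eq_self_iff_true, if_true, mul_one]
          calc |βhat k + σ * t| ≤ |βhat k| + |σ * t| := abs_add_le _ _
            _ = |βhat k| + t := by rw [abs_mul, hσabs, one_mul, abs_of_nonneg ht]
        · simp [hc, h]
      have h2 : ∑ k, (|βhat k| + t * (if k = j then 1 else 0)) = N + t := by
        rw [Finset.sum_add_distrib, ← hN]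
        simp only [mul_ite, mul_one, mul_zero, Finset.sum_ite_eq',
          Finset.mem_univ, if_true]
      calc ∑ k, |c t k| ≤ ∑ k, (|βhat k| + t * (if k = j then 1 else 0)) :=
            Finset.sum_le_sum fun k _ => h1 k
        _ = N + t := h2
    have hL0 : 0 ≤ ∑ k, |c t k| := Finset.sum_nonneg fun k _ => abs_nonneg _
    have hNt : 0 ≤ N + t := by linarith
    have hLsq : (∑ k, |c t k|) ^ 2 ≤ (N + t) ^ 2 := pow_le_pow_left₀ hL0 hLle 2
    have hfct : f (c t)
        = d * ((∑ i, (y i - ∑ k, W i k * βhat k) ^ 2) - 2 * t * |S| + t ^ 2 * A)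
          + lam * ∑ k, |c t k| + (δ / 2) * (∑ k, |c t k|) ^ 2 := by
      have : f (c t) = d * (∑ i, (y i - ∑ k, W i k * c t k) ^ 2)
          + lam * ∑ k, |c t k| + (δ / 2) * (∑ k, |c t k|) ^ 2 := rfl
      rw [this, hquad]
    have hfβ : f βhat
        = d * (∑ i, (y i - ∑ k, W i k * βhat k) ^ 2) + lam * N + (δ / 2) * N ^ 2 :=
      rfl
    rw [hfct, hfβ, hC]
    have h2 : lam * ∑ k, |c t k| ≤ lam * (N + t) :=
      mul_le_mul_of_nonneg_left hLle hlam
    have h3 : (δ / 2) * (∑ k, |c t k|) ^ 2 ≤ (δ / 2) * (N + t) ^ 2 :=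
      mul_le_mul_of_nonneg_left hLsq (by linarith)
    nlinarith [h2, h3]
  -- eventual inequality on the right neighborhood of 0
  have hev' : ∀ᶠ t in 𝓝[>] (0 : ℝ),
      (1 / (n : ℝ)) * |S| ≤ lam + δ * N + t * C := by
    filter_upwards [hev.filter_mono nhdsWithin_le_nhds, self_mem_nhdsWithin]
      with t h1 h2
    have ht : 0 < t := h2
    have h4 := key t ht.le
    have h5 : 0 ≤ -2 * t * |S| * d + t * (lam + δ * N) + t ^ 2 * C := by
      linarith [h1, h4]
    have h6 : (2 * d * |S|) * t ≤ (lam + δ * N + t * C) * t := by nlinarith [h5]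
    have h7 : 2 * d * |S| ≤ lam + δ * N + t * C := le_of_mul_le_mul_right h6 ht
    have h8 : 2 * d = 1 / (n : ℝ) := by rw [hd]; field_simp
    rw [← h8]; exact h7
  have hlim : Filter.Tendsto (fun t : ℝ => lam + δ * N + t * C) (𝓝[>] (0 : ℝ))
      (𝓝 (lam + δ * N)) := by
    have h1 : Filter.Tendsto (fun t : ℝ => lam + δ * N + t * C) (𝓝 (0 : ℝ))
        (𝓝 (lam + δ * N + 0 * C)) :=
      (continuous_const.add (continuous_id.mul continuous_const)).tendsto 0
    simpa using h1.mono_left nhdsWithin_le_nhds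
  exact ge_of_tendsto hlim hev'
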